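/- Let f : ℝ → ℝ be twice continuously differentiable on [a,b] with a < b, and let x ∈ [a,b]. Then (1/(b-a)) ∫_a^b f(t) dt − f(x) + ((2x−a−b)/2)·f'(x) = ((x−a)³/(2(b−a))) ∫_0^1 t² f''(t x + (1−t) a) dt + ((b−x)³/(2(b−a))) ∫_0^1 t² f''(t x + (1−t) b) dt. -/

import Mathlib

open intervalIntegral Set

lemma key_lemma (f : ℝ → ℝ) (U : Set ℝ) (hU : IsOpen U) (hf : ContDiffOn ℝ 2 f U)
    (c x : ℝ) (hseg : Set.uIcc c x ⊆ U) :
    ((x-c)^3/2) * (∫ t in (0:ℝ)..1, t^2 * deriv (deriv f) (t*x + (1-t)*c))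
      = ((x-c)^2/2) * deriv f x - (x-c) * f x + ∫ t in c..x, f t := by
  have hf1 : ContDiffOn ℝ 1 (deriv f) U := hf.deriv_of_isOpen hU (by norm_num)
  have hc2 : ContinuousOn (deriv (deriv f)) U :=
    (hf1.deriv_of_isOpen (m := 0) hU (by norm_num)).continuousOn
  have hc1 : ContinuousOn (deriv f) U := hf1.continuousOn
  have hc0 : ContinuousOn f U := hf.continuousOn
  have hfd : ∀ y ∈ U, DifferentiableAt ℝ f y := fun y hy =>
    (hf.contDiffAt (hU.mem_nhds hy)).differentiableAt two_ne_zero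
  have hfd' : ∀ y ∈ U, DifferentiableAt ℝ (deriv f) y := fun y hy =>
    (hf1.contDiffAt (hU.mem_nhds hy)).differentiableAt one_ne_zero
  set L : ℝ → ℝ := fun t => c + t*(x-c) with hLdef
  have hL : ∀ t : ℝ, HasDerivAt L (x-c) t := fun t => by
    have h := ((hasDerivAt_id t).mul_const (x-c)).const_add c
    rw [one_mul] at h
    exact h
  have hLc : Continuous L := by fun_prop
  have hLmem : ∀ t ∈ Set.uIcc (0:ℝ) 1, L t ∈ U := by
    intro t ht
    rw [Set.uIcc_of_le (by norm_num : (0:ℝ) ≤ 1)] at ht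
    apply hseg
    rw [← segment_eq_uIcc]
    exact ⟨1 - t, t, by linarith [ht.2], ht.1, by ring, by simp [hLdef]; ring⟩
  have hg : ∀ t ∈ Set.uIcc (0:ℝ) 1, HasDerivAt (fun t => f (L t)) ((x-c) * deriv f (L t)) t := by
    intro t ht
    have := ((hfd _ (hLmem t ht)).hasDerivAt).comp t (hL t)
    rw [mul_comm]
    exact this
  have hg' : ∀ t ∈ Set.uIcc (0:ℝ) 1,
      HasDerivAt (fun t => (x-c) * deriv f (L t)) ((x-c) * ((x-c) * deriv (deriv f) (L t))) t := by
    intro t ht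
    have h1 := ((hfd' _ (hLmem t ht)).hasDerivAt).comp t (hL t)
    have := h1.const_mul (x-c)
    simpa [mul_comm, mul_assoc, mul_left_comm] using this
  have hu : ∀ t ∈ Set.uIcc (0:ℝ) 1, HasDerivAt (fun t : ℝ => t^2) (2*t) t := by
    intro t _; simpa using hasDerivAt_pow 2 t
  have hu1 : ∀ t ∈ Set.uIcc (0:ℝ) 1, HasDerivAt (fun t : ℝ => 2*t) (2:ℝ) t := by
    intro t _; simpa using (hasDerivAt_id t).const_mul (2:ℝ)
  have hint2 : IntervalIntegrable (fun t => (x-c) * ((x-c) * deriv (deriv f) (L t)))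
      MeasureTheory.volume 0 1 :=
    (continuousOn_const.mul (continuousOn_const.mul (hc2.comp hLc.continuousOn hLmem))).intervalIntegrable
  have hint1 : IntervalIntegrable (fun t => (x-c) * deriv f (L t)) MeasureTheory.volume 0 1 :=
    (continuousOn_const.mul (hc1.comp hLc.continuousOn hLmem)).intervalIntegrable
  have ibp1 : ∫ t in (0:ℝ)..1, t^2 * ((x-c) * ((x-c) * deriv (deriv f) (L t)))
      = (1:ℝ)^2 * ((x-c) * deriv f (L 1)) - (0:ℝ)^2 * ((x-c) * deriv f (L 0))
        - ∫ t in (0:ℝ)..1, (2*t) * ((x-c) * deriv f (L t)) :=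
    intervalIntegral.integral_mul_deriv_eq_deriv_mul hu hg'
      (continuousOn_const.mul continuousOn_id).intervalIntegrable hint2
  have ibp2 : ∫ t in (0:ℝ)..1, (2*t) * ((x-c) * deriv f (L t))
      = (2*(1:ℝ)) * f (L 1) - (2*(0:ℝ)) * f (L 0) - ∫ t in (0:ℝ)..1, 2 * f (L t) :=
    intervalIntegral.integral_mul_deriv_eq_deriv_mul hu1 hg
      continuousOn_const.intervalIntegrable
      (continuousOn_const.mul (hc1.comp hLc.continuousOn hLmem)).intervalIntegrable
  have hsub : (∫ t in (0:ℝ)..1, (x-c) • f (L t)) = ∫ s in (L 0)..(L 1), f s :=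
    intervalIntegral.integral_comp_smul_deriv' (fun t _ => hL t) continuousOn_const
      (hc0.mono (by rw [Set.image_subset_iff]; exact fun t ht => hLmem t ht))
  have hL0 : L 0 = c := by simp [hLdef]
  have hL1 : L 1 = x := by simp [hLdef]
  rw [hL0, hL1] at hsub ibp1 ibp2
  simp only [smul_eq_mul] at hsub
  rw [intervalIntegral.integral_const_mul] at hsub
  have hmain : (∫ t in (0:ℝ)..1, t^2 * ((x-c) * ((x-c) * deriv (deriv f) (L t))))
      = (x-c)^2 * ∫ t in (0:ℝ)..1, t^2 * deriv (deriv f) (t*x + (1-t)*c) := by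
    rw [← intervalIntegral.integral_const_mul]
    apply intervalIntegral.integral_congr
    intro t _
    have h : t*x + (1-t)*c = L t := by simp [hLdef]; ring
    show t^2 * ((x-c)*((x-c)*deriv (deriv f) (L t))) = (x-c)^2 * (t^2 * deriv (deriv f) (t*x+(1-t)*c))
    rw [h]; ring
  have h2 : (∫ t in (0:ℝ)..1, 2 * f (L t)) = 2 * ∫ t in (0:ℝ)..1, f (L t) :=
    intervalIntegral.integral_const_mul 2 _
  rw [hmain, ibp2, h2] at ibp1
  linear_combination ((x-c)/2) * ibp1 + hsub

theorem stmt_0 (f : ℝ → ℝ) (a b x : ℝ) (hab : a < b) (hx : x ∈ Set.Icc a b)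
    (U : Set ℝ) (hU : IsOpen U) (hsub : Set.Icc a b ⊆ U) (hf : ContDiffOn ℝ 2 f U) :
    (1/(b-a)) * (∫ t in a..b, f t) - f x + ((2*x - a - b)/2) * deriv f x
      = ((x-a)^3/(2*(b-a))) * (∫ t in (0:ℝ)..1, t^2 * deriv (deriv f) (t*x + (1-t)*a))
      + ((b-x)^3/(2*(b-a))) * (∫ t in (0:ℝ)..1, t^2 * deriv (deriv f) (t*x + (1-t)*b)) := by
  have hba : b - a ≠ 0 := sub_ne_zero.2 hab.ne'
  have hsegA : Set.uIcc a x ⊆ U := fun y hy => hsub (by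
    rw [Set.uIcc_of_le hx.1] at hy
    exact ⟨hy.1, hy.2.trans hx.2⟩)
  have hsegB : Set.uIcc b x ⊆ U := fun y hy => hsub (by
    rw [Set.uIcc_of_ge hx.2] at hy
    exact ⟨hx.1.trans hy.1, hy.2⟩)
  have Ia := key_lemma f U hU hf a x hsegA
  have Ib := key_lemma f U hU hf b x hsegB
  have hIntA : IntervalIntegrable f MeasureTheory.volume a x :=
    ((hf.continuousOn.mono hsegA)).intervalIntegrable
  have hIntB : IntervalIntegrable f MeasureTheory.volume x b :=
    ((hf.continuousOn.mono hsegB).mono (by rw [Set.uIcc_comm] : Set.uIcc x b ⊆ Set.uIcc b x)).intervalIntegrable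
  have hsplit : (∫ t in a..x, f t) + (∫ t in x..b, f t) = ∫ t in a..b, f t :=
    intervalIntegral.integral_add_adjacent_intervals hIntA hIntB
  have hsym : (∫ t in b..x, f t) = - ∫ t in x..b, f t := intervalIntegral.integral_symm x b
  rw [hsym] at Ib
  have goal2 : (∫ t in a..b, f t) - (b-a)*f x + ((2*x-a-b)*(b-a)/2)*deriv f x
      = ((x-a)^3/2) * (∫ t in (0:ℝ)..1, t^2 * deriv (deriv f) (t*x + (1-t)*a))
      + ((b-x)^3/2) * (∫ t in (0:ℝ)..1, t^2 * deriv (deriv f) (t*x + (1-t)*b)) := by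
    linear_combination Ib - Ia - hsplit
  generalize (∫ t in a..b, f t) = A at goal2 ⊢
  generalize (∫ t in (0:ℝ)..1, t^2 * deriv (deriv f) (t*x + (1-t)*a)) = IA at goal2 ⊢
  generalize (∫ t in (0:ℝ)..1, t^2 * deriv (deriv f) (t*x + (1-t)*b)) = IB at goal2 ⊢
  field_simp
  linear_combination 2 * goal2
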